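/- For every integer d ≥ 0, the formal power series identity Σ_{m≥0} (Σ_{k=0}^{d} C(d,k)·C(m+d−k, d)) t^m = (1+t)^d / (1−t)^{d+1} holds in ℚ[[t]]. -/

import Mathlib

open PowerSeries

lemma nat_sum_aux (d n : ℕ) :
    (∑ k ∈ Finset.range (d + 1), d.choose k * (n + d - k).choose d) =
    ∑ k ∈ Finset.range (n + 1), d.choose k * (d + (n - k)).choose d := by
  have h1 : (∑ k ∈ Finset.range (n + d + 1), d.choose k * (n + d - k).choose d) =
      ∑ k ∈ Finset.range (d + 1), d.choose k * (n + d - k).choose d := by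
    refine (Finset.sum_subset (by intro x hx; simp at *; omega) ?_).symm
    intro x hx hx'
    simp only [Finset.mem_range] at hx hx'
    rw [Nat.choose_eq_zero_of_lt (by omega), zero_mul]
  have h2 : (∑ k ∈ Finset.range (n + d + 1), d.choose k * (n + d - k).choose d) =
      ∑ k ∈ Finset.range (n + 1), d.choose k * (n + d - k).choose d := by
    refine (Finset.sum_subset (by intro x hx; simp at *; omega) ?_).symm
    intro x hx hx'
    simp only [Finset.mem_range] at hx hx'
    rw [Nat.choose_eq_zero_of_lt (show n + d - x < d by omega), mul_zero]
  rw [← h1, h2]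
  refine Finset.sum_congr rfl fun k hk => ?_
  simp only [Finset.mem_range] at hk
  congr 2
  omega

lemma coeff_one_add_X_pow (d n : ℕ) :
    (PowerSeries.coeff (R := ℚ) n) ((1 + PowerSeries.X) ^ d) = d.choose n := by
  have h : ((1 : ℚ⟦X⟧) + PowerSeries.X) ^ d =
      (((1 + Polynomial.X) ^ d : Polynomial ℚ) : ℚ⟦X⟧) := by
    simp [Polynomial.coe_pow, Polynomial.coe_add, Polynomial.coe_one, Polynomial.coe_X]
  rw [h, Polynomial.coeff_coe, Polynomial.coeff_one_add_X_pow]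

theorem cross_polytope_ehrhart_series (d : ℕ) :
    (PowerSeries.mk fun m =>
        ((∑ k ∈ Finset.range (d + 1), d.choose k * (m + d - k).choose d : ℕ) : ℚ))
      * (1 - PowerSeries.X) ^ (d + 1) = (1 + PowerSeries.X) ^ d := by
  have key : (PowerSeries.mk fun m =>
        ((∑ k ∈ Finset.range (d + 1), d.choose k * (m + d - k).choose d : ℕ) : ℚ)) =
      (1 + PowerSeries.X) ^ d * (PowerSeries.mk fun m => ((d + m).choose d : ℚ)) := by
    ext n
    rw [coeff_mul, Finset.Nat.sum_antidiagonal_eq_sum_range_succ_mk]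
    simp only [coeff_mk, coeff_one_add_X_pow]
    rw [nat_sum_aux]
    push_cast
    rfl
  rw [key, mul_assoc]
  have := (PowerSeries.invOneSubPow ℚ (d + 1)).val_inv
  rw [PowerSeries.invOneSubPow_val_succ_eq_mk_add_choose,
    PowerSeries.invOneSubPow_inv_eq_one_sub_pow] at this
  rw [this, mul_one]
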